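/- Let L, R, D be non-negative real numbers with L > 0, and λ a complex number with Im(λ) > 0 and |λ|² < D/L. Then z := R + L·λ + D/λ is nonzero and ρ := 1/z satisfies Im(ρ)/|ρ| ≥ (D/(L|λ|²) - 1) / (|λ| + D/(L|λ|) + R/L) · Im(λ). -/

import Mathlib

theorem im_div_abs_ge_small_im (L R D : ℝ) (hL : 0 < L) (hR : 0 ≤ R) (hD : 0 ≤ D)
    (lam : ℂ) (him : 0 < lam.im) (habs : (‖lam‖) ^ 2 < D / L) :
    (R : ℂ) + (L : ℂ) * lam + (D : ℂ) / lam ≠ 0 ∧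
    ∀ z rho : ℂ, z = (R : ℂ) + (L : ℂ) * lam + (D : ℂ) / lam → rho = 1 / z →
      rho.im / ‖rho‖ ≥
        (D / (L * (‖lam‖) ^ 2) - 1) /
          (‖lam‖ + D / (L * ‖lam‖) + R / L) * lam.im := by
  have hlam : lam ≠ 0 := fun h => by simp [h] at him
  set a := ‖lam‖ with ha_def
  have ha : 0 < a := norm_pos_iff.mpr hlam
  have hDL : L * a ^ 2 < D := by
    rw [lt_div_iff₀ hL] at habs; nlinarith
  have hns : Complex.normSq lam = a ^ 2 := (Complex.sq_norm lam).symm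
  have hzim : ((R:ℂ) + L*lam + D/lam).im = lam.im * (L - D / a ^ 2) := by
    simp [Complex.add_im, Complex.div_im, hns, Complex.mul_im]
    field_simp
    ring
  have hfac : L - D / a ^ 2 < 0 := by
    rw [sub_neg]
    rw [lt_div_iff₀ (by positivity)]
    nlinarith
  have hzimneg : ((R:ℂ)+L*lam+D/lam).im < 0 := by
    rw [hzim]; exact mul_neg_of_pos_of_neg him hfac
  have hz0 : (R:ℂ)+(L:ℂ)*lam+(D:ℂ)/lam ≠ 0 := by
    intro h; rw [h] at hzimneg; simp at hzimneg
  refine ⟨hz0, ?_⟩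
  intro z rho hz hrho
  subst hz
  subst hrho
  have hzabs : 0 < ‖((R:ℂ)+(L:ℂ)*lam+(D:ℂ)/lam)‖ := norm_pos_iff.mpr hz0
  set w : ℂ := (R:ℂ)+(L:ℂ)*lam+(D:ℂ)/lam with hw
  have hB : ‖w‖ ≤ R + L * a + D / a := by
    calc ‖w‖ ≤ ‖((R:ℂ)+(L:ℂ)*lam)‖ + ‖((D:ℂ)/lam)‖ :=
          norm_add_le _ _
      _ ≤ (‖(R:ℂ)‖ + ‖((L:ℂ)*lam)‖) + ‖((D:ℂ)/lam)‖ := by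
          gcongr; exact norm_add_le _ _
      _ = R + L * a + D / a := by
          simp [norm_mul, norm_div, Complex.norm_real, Real.norm_eq_abs, abs_of_nonneg hR,
            abs_of_nonneg hD, abs_of_pos hL, ← ha_def]
  -- rewrite LHS
  have hLHS : (1/w).im / ‖(1/w)‖ = (-w.im) / ‖w‖ := by
    rw [one_div, Complex.inv_im, norm_inv, Complex.normSq_eq_norm_sq]
    field_simp
  rw [hLHS]
  have hwim : -w.im = lam.im * (D / a ^ 2 - L) := by rw [hw, hzim]; ring
  have hwimpos : 0 < -w.im := by rw [hwim]; nlinarith [mul_pos him (neg_pos.mpr hfac)]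
  have hBpos : 0 < R + L * a + D / a := by positivity
  have hRHS : (D / (L * a ^ 2) - 1) / (a + D / (L * a) + R / L) * lam.im
      = (-w.im) / (R + L * a + D / a) := by
    rw [hwim]
    have hden : a + D / (L * a) + R / L = (R + L * a + D / a) / L := by
      field_simp; ring
    rw [hden]
    field_simp
  rw [ge_iff_le, hRHS]
  exact div_le_div_of_nonneg_left hwimpos.le hzabs hB
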